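/- arXiv:1909.11623 — 6 statements merged into one kernel-verified Lean document; each statement's English description precedes it below -/
import Mathlib

section
/- If $\mathcal{A}$ is a maximal $\kappa$-independent family, then the collection of Boolean combinations $\{\mathcal{A}^h : h \in \mathrm{FF}_{<\omega,\kappa}(\mathcal{A})\}$ is not split by any single set: there is no $X \in [\kappa]^\kappa$ such that for every Boolean combination $\mathcal{A}^h$, both $\mathcal{A}^h \cap X$ and $\mathcal{A}^h \setminus X$ are unbounded in $\kappa$. Consequently, the generalized reaping number $\mathfrak{r}(\kappa)$ is at most the cardinality of any maximal $\kappa$-independent family, so $\mathfrak{r}(\kappa) \le \mathfrak{i}(\kappa)$. -/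
open Set Cardinal

/-- Finite partial functions from a family of sets to `{0,1}` (as `Option Bool`):
`h s = some true` means `s` is taken positively, `some false` negatively. -/
def FF {α : Type*} (𝒜 : Set (Set α)) : Set (Set α → Option Bool) :=
  {h | (∀ s, h s ≠ none → s ∈ 𝒜) ∧ {s | h s ≠ none}.Finite}

/-- The Boolean combination determined by a partial function `h`. -/
def bc {α : Type*} (h : Set α → Option Bool) : Set α :=
  {x | ∀ s : Set α, (h s = some true → x ∈ s) ∧ (h s = some false → x ∉ s)}

/-- `h'` extends `h` as a partial function. -/
def extFF {α : Type*} (h h' : Set α → Option Bool) : Prop :=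
  ∀ s b, h s = some b → h' s = some b

/-- A family is κ-independent if every finite Boolean combination is unbounded. -/
def kIndepF {α : Type*} [Preorder α] (𝒜 : Set (Set α)) : Prop :=
  ∀ h ∈ FF 𝒜, ¬ BddAbove (bc h)
/-- `X` splits `R` if both `R ∩ X` and `R \ X` are unbounded. -/
def splits {α : Type*} [Preorder α] (X R : Set α) : Prop :=
  ¬ BddAbove (R ∩ X) ∧ ¬ BddAbove (R \ X)

/-- `𝒜 ⊆ [κ]^κ` is a κ-independent family. -/
def kIndepFam (κ : Cardinal) (𝒜 : Set (Set κ.ord.ToType)) : Prop :=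
  (∀ X ∈ 𝒜, #X = κ) ∧ ∀ h ∈ FF 𝒜, ¬ BddAbove (bc h)

/-- `𝒜` is a maximal κ-independent family. -/
def maxIndep (κ : Cardinal) (𝒜 : Set (Set κ.ord.ToType)) : Prop :=
  kIndepFam κ 𝒜 ∧ ∀ ℬ, kIndepFam κ ℬ → 𝒜 ⊆ ℬ → ℬ = 𝒜

/-- The generalized reaping number `𝔯(κ)`: least size of a family in `[κ]^κ`
not split by any single `X ∈ [κ]^κ`. -/
noncomputable def reap (κ : Cardinal) : Cardinal :=
  sInf {c | ∃ R : Set (Set κ.ord.ToType), #R = c ∧ (∀ r ∈ R, #r = κ) ∧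
    ¬ ∃ X : Set κ.ord.ToType, #X = κ ∧ ∀ r ∈ R, splits X r}

/-- The higher independence number `𝔦(κ)`: least size of a maximal κ-independent family. -/
noncomputable def iNum (κ : Cardinal) : Cardinal :=
  sInf {c | ∃ 𝒜, maxIndep κ 𝒜 ∧ #𝒜 = c}

/-! ### Auxiliary lemmas -/

lemma aux_card_of_unbounded {κ : Cardinal} (hreg : κ.IsRegular)
    {S : Set κ.ord.ToType} (h : ¬ BddAbove S) : #S = κ := by
  haveI : IsWellOrder κ.ord.ToType ((· < ·) : κ.ord.ToType → κ.ord.ToType → Prop) :=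
    isWellOrder_lt
  apply le_antisymm
  · exact (mk_set_le S).trans_eq (by rw [mk_toType, card_ord])
  · have hu : Unbounded ((· < ·) : κ.ord.ToType → κ.ord.ToType → Prop) S := by
      intro a
      rw [not_bddAbove_iff] at h
      obtain ⟨b, hb, hab⟩ := h a
      exact ⟨b, hb, asymm hab⟩
    have := Order.cof_le (s := S) (fun a => (hu a).imp fun b hb => ⟨hb.1, not_lt.1 hb.2⟩)
    rwa [Ordinal.cof_toType, hreg.cof_eq] at this

lemma aux_unbounded_of_card {κ : Cardinal} (hunc : ℵ₀ < κ)
    {S : Set κ.ord.ToType} (h : κ ≤ #S) : ¬ BddAbove S := by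
  rintro ⟨b, hb⟩
  have hsub : S ⊆ insert b (Iio b) := by
    intro x hx
    rcases lt_or_eq_of_le (hb hx) with h' | h'
    · exact Or.inr h'
    · exact Or.inl h'
  have h1 : #S ≤ #(Iio b) + 1 := (mk_le_mk_of_subset hsub).trans mk_insert_le
  have h2 : #(Iio b) + 1 < κ :=
    Cardinal.add_lt_of_lt hunc.le (mk_Iio_ord_toType b) (lt_trans one_lt_aleph0 hunc)
  exact absurd (h.trans h1) (not_le.2 h2)

lemma aux_two_le {c : Cardinal} (hc : ℵ₀ ≤ c) : (2 : Cardinal) ≤ c :=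
  le_trans (by exact_mod_cast (Cardinal.nat_lt_aleph0 2).le) hc

lemma aux_split_half {α : Type*} {S : Set α} (hS : ℵ₀ ≤ #S) :
    ∃ T : Set α, T ⊆ S ∧ #S ≤ #T ∧ #S ≤ #(S \ T : Set α) := by
  have hcard : #(↥S × Bool) = #S := by
    rw [mk_prod, mk_bool, Cardinal.lift_id', Cardinal.lift_two]
    exact mul_eq_left hS (aux_two_le hS) two_ne_zero
  obtain ⟨e⟩ := Cardinal.eq.1 hcard
  set T : Set α := {a | ∃ x : S, ((e (x, true) : S) : α) = a} with hT
  have hTS : T ⊆ S := by rintro a ⟨x, rfl⟩; exact (e (x, true)).2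
  have hmemT : ∀ x : S, ((e (x, true) : S) : α) ∈ T := fun x => ⟨x, rfl⟩
  have hmemF : ∀ x : S, ((e (x, false) : S) : α) ∈ S \ T := by
    intro x
    refine ⟨(e (x, false)).2, ?_⟩
    rintro ⟨y, hy⟩
    have := e.injective (Subtype.val_injective hy)
    exact Bool.noConfusion (congrArg Prod.snd this)
  refine ⟨T, hTS, ?_, ?_⟩
  · refine mk_le_of_injective (f := fun x : S => (⟨_, hmemT x⟩ : T)) ?_
    intro x y hxy
    simp only [Subtype.mk.injEq] at hxy
    have h2 := e.injective (Subtype.val_injective hxy)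
    exact congrArg Prod.fst h2
  · refine mk_le_of_injective (f := fun x : S => (⟨_, hmemF x⟩ : (S \ T : Set α))) ?_
    intro x y hxy
    simp only [Subtype.mk.injEq] at hxy
    have h2 := e.injective (Subtype.val_injective hxy)
    exact congrArg Prod.fst h2

/-- Part 1: no single set splits all Boolean combinations of a maximal family. -/
lemma aux_nosplit (κ : Cardinal) (hreg : κ.IsRegular) (hunc : ℵ₀ < κ)
    (𝒜 : Set (Set κ.ord.ToType)) (hmax : maxIndep κ 𝒜) :
    ¬ ∃ X : Set κ.ord.ToType, #X = κ ∧ ∀ h ∈ FF 𝒜, splits X (bc h) := by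
  classical
  haveI : Nonempty κ.ord.ToType := by
    rw [Ordinal.toType_nonempty_iff_ne_zero, ne_eq, Cardinal.ord_eq_zero]
    exact fun h => (h ▸ hunc).not_gt aleph0_pos
  rintro ⟨X, hXκ, hsp⟩
  have hXnot : X ∉ 𝒜 := by
    intro hX
    set h : Set κ.ord.ToType → Option Bool := fun s => if s = X then some true else none with hh
    have hFF : h ∈ FF 𝒜 := by
      constructor
      · intro s hs
        by_cases h' : s = X
        · exact h' ▸ hX
        · simp [hh, h'] at hs
      · refine (Set.finite_singleton X).subset fun s hs => ?_
        by_contra h'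
        simp only [mem_singleton_iff] at h'
        simp [hh, h'] at hs
    have hsub : bc h ⊆ X := fun x hx => (hx X).1 (by simp [hh])
    have hempty : bc h \ X = ∅ := by rw [diff_eq_empty]; exact hsub
    exact (hsp h hFF).2 (hempty ▸ bddAbove_empty)
  have hind : kIndepFam κ (insert X 𝒜) := by
    constructor
    · rintro Y (rfl | hY)
      · exact hXκ
      · exact hmax.1.1 Y hY
    · intro h hFF
      set h' : Set κ.ord.ToType → Option Bool := fun s => if s = X then none else h s with hh'
      have hFF' : h' ∈ FF 𝒜 := by
        constructor
        · intro s hs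
          by_cases hsX : s = X
          · simp [hh', hsX] at hs
          · rcases hFF.1 s (by simpa [hh', hsX] using hs) with rfl | h2
            · exact absurd rfl hsX
            · exact h2
        · refine hFF.2.subset fun s hs => ?_
          by_cases hsX : s = X
          · simp [hh', hsX] at hs
          · simpa [hh', hsX] using hs
      have key : ∀ x, x ∈ bc h' → ((h X = some true → x ∈ X) ∧ (h X = some false → x ∉ X)) →
          x ∈ bc h := by
        intro x hx hX' s
        by_cases hsX : s = X
        · subst hsX; exact hX'
        · constructor
          · intro hs; exact (hx s).1 (by simp [hh', hsX, hs])
          · intro hs; exact (hx s).2 (by simp [hh', hsX, hs])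
      rcases hXb : h X with _ | b
      · intro hb
        refine hmax.1.2 h' hFF' (hb.mono fun x hx => key x hx ?_)
        constructor <;> intro h0 <;> rw [hXb] at h0 <;> exact nomatch h0
      · cases b
        · intro hb
          refine (hsp h' hFF').2 (hb.mono fun x hx => key x hx.1 ?_)
          refine ⟨fun h0 => ?_, fun _ => hx.2⟩
          rw [hXb] at h0; simp at h0
        · intro hb
          refine (hsp h' hFF').1 (hb.mono fun x hx => key x hx.1 ?_)
          refine ⟨fun _ => hx.2, fun h0 => ?_⟩
          rw [hXb] at h0; simp at h0
  have heq := hmax.2 _ hind (subset_insert X 𝒜)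
  exact hXnot (heq ▸ mem_insert X 𝒜)

/-- A maximal κ-independent family is infinite. -/
lemma aux_infinite (κ : Cardinal) (hreg : κ.IsRegular) (hunc : ℵ₀ < κ)
    (𝒜 : Set (Set κ.ord.ToType)) (hmax : maxIndep κ 𝒜) : 𝒜.Infinite := by
  classical
  by_contra hinf
  rw [Set.not_infinite] at hinf
  apply aux_nosplit κ hreg hunc 𝒜 hmax
  set atom : (↥𝒜 → Bool) → Set κ.ord.ToType :=
    fun g => {x | ∀ s : ↥𝒜, x ∈ (s : Set κ.ord.ToType) ↔ g s = true} with hatomdef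
  have hatom : ∀ g, ¬ BddAbove (atom g) := by
    intro g
    set hg : Set κ.ord.ToType → Option Bool :=
      fun s => if hs : s ∈ 𝒜 then some (g ⟨s, hs⟩) else none with hhg
    have hFF : hg ∈ FF 𝒜 := by
      constructor
      · intro s hs
        by_cases h' : s ∈ 𝒜
        · exact h'
        · simp [hhg, h'] at hs
      · refine hinf.subset fun s hs => ?_
        by_contra h'
        simp [hhg, h'] at hs
    have hsub : bc hg ⊆ atom g := by
      intro x hx s
      rcases hb : g s with _ | _
      · constructor
        · intro hxs
          refine absurd hxs ((hx ↑s).2 ?_)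
          simp only [hhg]
          rw [dif_pos s.2, Subtype.coe_eta, hb]
        · intro h0; exact Bool.noConfusion h0
      · constructor
        · intro _; rfl
        · intro _
          refine (hx ↑s).1 ?_
          simp only [hhg]
          rw [dif_pos s.2, Subtype.coe_eta, hb]
    exact fun hb' => hmax.1.2 hg hFF (hb'.mono hsub)
  have hcard : ∀ g, ℵ₀ ≤ #(atom g) := fun g => by
    rw [aux_card_of_unbounded hreg (hatom g)]; exact hreg.1
  choose T hT1 hT2 hT3 using fun g => aux_split_half (hcard g)
  have hTκ : ∀ g, κ ≤ #(T g) := fun g =>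
    le_trans (le_of_eq (aux_card_of_unbounded hreg (hatom g)).symm) (hT2 g)
  have hTκ' : ∀ g, κ ≤ #(atom g \ T g : Set κ.ord.ToType) := fun g =>
    le_trans (le_of_eq (aux_card_of_unbounded hreg (hatom g)).symm) (hT3 g)
  set X := ⋃ g, T g with hXdef
  have hTX : ∀ g, T g ⊆ X := fun g => subset_iUnion T g
  refine ⟨X, ?_, ?_⟩
  · apply le_antisymm
    · exact (mk_set_le X).trans_eq (by rw [mk_toType, card_ord])
    · exact (hTκ fun _ => true).trans (mk_le_mk_of_subset (hTX _))
  · intro h hFF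
    set g : ↥𝒜 → Bool := fun s => ((h ↑s).getD true) with hgdef
    have hag : atom g ⊆ bc h := by
      intro x hx s
      constructor
      · intro hs
        have hs𝒜 : s ∈ 𝒜 := hFF.1 s (by rw [hs]; simp)
        exact (hx ⟨s, hs𝒜⟩).2 (by simp [hgdef, hs])
      · intro hs hxs
        have hs𝒜 : s ∈ 𝒜 := hFF.1 s (by rw [hs]; simp)
        have h2 := (hx ⟨s, hs𝒜⟩).1 hxs
        simp [hgdef, hs] at h2
    constructor
    · intro hb
      have hsub2 : T g ⊆ bc h ∩ X := fun x hx => ⟨hag (hT1 g hx), hTX g hx⟩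
      exact aux_unbounded_of_card hunc (hTκ g) (hb.mono hsub2)
    · intro hb
      have hdisjoint : ∀ g', g' ≠ g → ∀ x ∈ atom g, x ∉ T g' := by
        intro g' hgg x hxg hxT
        have hxg' := hT1 g' hxT
        obtain ⟨s, hs⟩ := Function.ne_iff.1 hgg
        apply hs
        rw [Bool.eq_iff_iff]
        exact (hxg' s).symm.trans (hxg s)
      have hsub3 : atom g \ T g ⊆ bc h \ X := by
        rintro x ⟨hx1, hx2⟩
        refine ⟨hag hx1, ?_⟩
        rw [mem_iUnion]
        rintro ⟨g', hg'⟩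
        by_cases hgg : g' = g
        · exact hx2 (hgg ▸ hg')
        · exact hdisjoint g' hgg x hx1 hg'
      exact aux_unbounded_of_card hunc (hTκ' g) (hb.mono hsub3)

/-- `reap κ` is at most the size of any maximal κ-independent family. -/
lemma aux_reap_le (κ : Cardinal) (hreg : κ.IsRegular) (hunc : ℵ₀ < κ)
    (𝒜 : Set (Set κ.ord.ToType)) (hmax : maxIndep κ 𝒜) : reap κ ≤ #𝒜 := by
  classical
  have hns := aux_nosplit κ hreg hunc 𝒜 hmax
  have hinf : 𝒜.Infinite := aux_infinite κ hreg hunc 𝒜 hmax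
  haveI : Infinite ↥𝒜 := hinf.to_subtype
  refine le_trans (csInf_le' ⟨bc '' FF 𝒜, rfl, ?_, ?_⟩) ?_
  · rintro r ⟨h, hh, rfl⟩
    exact aux_card_of_unbounded hreg (hmax.1.2 h hh)
  · rintro ⟨Y, hY, hsp⟩
    exact hns ⟨Y, hY, fun h hh => hsp _ ⟨h, hh, rfl⟩⟩
  · have h1 : #(bc '' FF 𝒜) ≤ #(FF 𝒜) := mk_image_le
    have hgraphfin : ∀ h : ↥(FF 𝒜), {p : ↥𝒜 × Bool | h.1 ↑p.1 = some p.2}.Finite := by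
      intro h
      have hsupp : {s : ↥𝒜 | h.1 ↑s ≠ none}.Finite :=
        Set.Finite.preimage Subtype.val_injective.injOn h.2.2
      refine (hsupp.prod Set.finite_univ).subset ?_
      rintro ⟨s, b⟩ hp
      exact Set.mem_prod.2 ⟨by simp only [mem_setOf_eq] at hp ⊢; simp [hp], mem_univ _⟩
    have h2 : #(FF 𝒜) ≤ #(Finset (↥𝒜 × Bool)) := by
      refine mk_le_of_injective (f := fun h : ↥(FF 𝒜) => (hgraphfin h).toFinset) ?_
      intro h₁ h₂ heq
      have hsets : {p : ↥𝒜 × Bool | h₁.1 ↑p.1 = some p.2} = {p | h₂.1 ↑p.1 = some p.2} := by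
        have hc := congrArg (fun t : Finset (↥𝒜 × Bool) => (t : Set (↥𝒜 × Bool))) heq
        simpa only [Set.Finite.coe_toFinset] using hc
      have hiff : ∀ (s : Set κ.ord.ToType) (b : Bool), h₁.1 s = some b ↔ h₂.1 s = some b := by
        intro s b
        constructor
        · intro hs
          have hs𝒜 : s ∈ 𝒜 := h₁.2.1 s (by simp [hs])
          have hm : (⟨⟨s, hs𝒜⟩, b⟩ : ↥𝒜 × Bool) ∈ {p : ↥𝒜 × Bool | h₁.1 ↑p.1 = some p.2} := hs
          rw [hsets] at hm
          exact hm
        · intro hs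
          have hs𝒜 : s ∈ 𝒜 := h₂.2.1 s (by simp [hs])
          have hm : (⟨⟨s, hs𝒜⟩, b⟩ : ↥𝒜 × Bool) ∈ {p : ↥𝒜 × Bool | h₂.1 ↑p.1 = some p.2} := hs
          rw [← hsets] at hm
          exact hm
      apply Subtype.ext; funext s
      rcases h1s : h₁.1 s with _ | b
      · rcases h2s : h₂.1 s with _ | b
        · rfl
        · exact absurd ((hiff s b).2 h2s) (by simp [h1s])
      · exact ((hiff s b).1 h1s).symm
    have h3 : #(Finset (↥𝒜 × Bool)) = #(↥𝒜 × Bool) := mk_finset_of_infinite _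
    have h4 : #(↥𝒜 × Bool) = #𝒜 := by
      rw [mk_prod, mk_bool, Cardinal.lift_id', Cardinal.lift_two]
      exact mul_eq_left (aleph0_le_mk _) (aux_two_le (aleph0_le_mk _)) two_ne_zero
    exact h1.trans (h2.trans (le_of_eq (h3.trans h4)))

/-- Boolean combinations of a maximal κ-independent family are not split by a single set;
hence 𝔯(κ) ≤ |𝒜| and 𝔯(κ) ≤ 𝔦(κ). -/
theorem stmt_3 (κ : Cardinal) (hreg : κ.IsRegular) (hunc : ℵ₀ < κ)
    (𝒜 : Set (Set κ.ord.ToType)) (hmax : maxIndep κ 𝒜) :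
    (¬ ∃ X : Set κ.ord.ToType, #X = κ ∧ ∀ h ∈ FF 𝒜, splits X (bc h)) ∧
    reap κ ≤ #𝒜 ∧ reap κ ≤ iNum κ := by
  refine ⟨aux_nosplit κ hreg hunc 𝒜 hmax, aux_reap_le κ hreg hunc 𝒜 hmax, ?_⟩
  refine le_csInf ⟨#𝒜, 𝒜, hmax, rfl⟩ ?_
  rintro c ⟨ℬ, hB, rfl⟩
  exact aux_reap_le κ hreg hunc ℬ hB
end

section
/- A $\kappa$-independent family $\mathcal{A}$ is densely maximal if and only if it satisfies: for all $h \in \mathrm{FF}_{<\omega,\kappa}(\mathcal{A})$ and all $X \subseteq \mathcal{A}^h$, either $\mathcal{A}^h \setminus X$ belongs to the density ideal $\mathrm{id}_{<\omega,\kappa}(\mathcal{A})$ (equivalently, is contained in a member of it), or there is $h' \supseteq h$ in $\mathrm{FF}_{<\omega,\kappa}(\mathcal{A})$ with $\mathcal{A}^{h'} \subseteq \mathcal{A}^h \setminus X$. -/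
open Set Cardinal

/-- The density ideal: `X` is in it iff every finite Boolean combination can be refined
to one disjoint from `X`. -/
def densId {α : Type*} (𝒜 : Set (Set α)) : Set (Set α) :=
  {X | ∀ h ∈ FF 𝒜, ∃ h' ∈ FF 𝒜, extFF h h' ∧ bc h' ∩ X = ∅}

/-- `𝒜` is densely maximal: every `X ∈ [κ]^κ \ 𝒜` is decided (mod the combination)
below every finite Boolean combination. -/
def denselyMax (κ : Cardinal) (𝒜 : Set (Set κ.ord.ToType)) : Prop :=
  ∀ X : Set κ.ord.ToType, #X = κ → X ∉ 𝒜 → ∀ h ∈ FF 𝒜,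
    ∃ h' ∈ FF 𝒜, extFF h h' ∧ (bc h' ∩ X = ∅ ∨ bc h' \ X = ∅)

section Aux

variable {α : Type*}

lemma bc_anti {h h' : Set α → Option Bool} (he : extFF h h') : bc h' ⊆ bc h := fun x hx s =>
  ⟨fun hs => (hx s).1 (he s true hs), fun hs => (hx s).2 (he s false hs)⟩

open Classical in
noncomputable def addFF (h : Set α → Option Bool) (A : Set α) (b : Bool) : Set α → Option Bool :=
  fun s => if s = A then some b else h s

lemma addFF_mem {𝒜 : Set (Set α)} {h} (hh : h ∈ FF 𝒜) {A} (hA : A ∈ 𝒜) (b : Bool) :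
    addFF h A b ∈ FF 𝒜 := by
  constructor
  · intro s hs
    by_cases hsA : s = A
    · exact hsA ▸ hA
    · exact hh.1 s (by simpa [addFF, hsA] using hs)
  · apply (hh.2.union (Set.finite_singleton A)).subset
    intro s hs
    by_cases hsA : s = A
    · exact Or.inr hsA
    · exact Or.inl (by simpa [addFF, hsA] using hs)

lemma addFF_ext {h : Set α → Option Bool} {A} (hA : h A = none) (b : Bool) :
    extFF h (addFF h A b) := by
  intro s b' hs
  have hne : s ≠ A := fun e => by rw [e, hA] at hs; cases hs
  simp [addFF, hne, hs]

lemma addFF_subset {h : Set α → Option Bool} (A : Set α) :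
    bc (addFF h A true) ⊆ A := fun x hx => (hx A).1 (by simp [addFF])

/-- Union of two compatible partial functions. -/
def unionFF (g h : Set α → Option Bool) : Set α → Option Bool :=
  fun s => (g s).elim (h s) some

lemma unionFF_mem {𝒜 : Set (Set α)} {g h} (hg : g ∈ FF 𝒜) (hh : h ∈ FF 𝒜) :
    unionFF g h ∈ FF 𝒜 := by
  constructor
  · intro s hs
    cases hgs : g s with
    | some b => exact hg.1 s (by simp [hgs])
    | none => exact hh.1 s (by simpa [unionFF, hgs] using hs)
  · apply (hg.2.union hh.2).subset
    intro s hs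
    cases hgs : g s with
    | some b => exact Or.inl (by simp [hgs])
    | none => exact Or.inr (by simpa [unionFF, hgs] using hs)

lemma unionFF_ext_left (g h : Set α → Option Bool) : extFF g (unionFF g h) := by
  intro s b hs; simp [unionFF, hs]

lemma unionFF_ext_right {g h : Set α → Option Bool}
    (hcomp : ∀ s b, h s = some b → g s = none ∨ g s = some b) : extFF h (unionFF g h) := by
  intro s b hs
  rcases hcomp s b hs with h0 | h0 <;> simp [unionFF, h0, hs]

end Aux

/-- Characterization of dense maximality via the density ideal. -/
theorem stmt_9 (κ : Cardinal) (hreg : κ.IsRegular) (hunc : ℵ₀ < κ)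
    (𝒜 : Set (Set κ.ord.ToType)) (hsz : ∀ X ∈ 𝒜, #X = κ) (hind : kIndepF 𝒜) :
    denselyMax κ 𝒜 ↔
      ∀ h ∈ FF 𝒜, ∀ X : Set κ.ord.ToType, X ⊆ bc h →
        bc h \ X ∈ densId 𝒜 ∨
        ∃ h' ∈ FF 𝒜, extFF h h' ∧ bc h' ⊆ bc h \ X := by
  have hκ0 : κ ≠ 0 := hreg.pos.ne'
  have hne : Nonempty κ.ord.ToType := by
    rw [Ordinal.nonempty_toType_iff]
    intro h0
    exact hκ0 (by simpa using congrArg Ordinal.card h0)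
  -- an unbounded subset of `κ.ord.ToType` has cardinality `κ`
  have hcard : ∀ U : Set κ.ord.ToType, ¬ BddAbove U → #U = κ := by
    intro U hU
    refine le_antisymm ?_ ?_
    · calc #U ≤ #(univ : Set κ.ord.ToType) := mk_le_mk_of_subset (subset_univ U)
        _ = κ := by rw [mk_univ, Cardinal.mk_toType, Cardinal.card_ord]
    · by_contra hlt
      push_neg at hlt
      apply hU
      set e := Ordinal.ToType.mk (o := κ.ord) with he
      have hsup : iSup (fun x : U => (e.symm x.val).val) < κ.ord := by
        refine Cardinal.iSup_lt_ord_of_isRegular hreg hlt ?_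
        intro i; exact (e.symm i.val).prop
      refine ⟨e ⟨_, hsup⟩, fun x hx => ?_⟩
      have hx' : x = e (e.symm x) := (OrderIso.apply_symm_apply _ _).symm
      rw [hx']
      refine e.le_iff_le.mpr (Subtype.mk_le_mk.mpr ?_)
      exact Ordinal.le_iSup (fun x : U => (e.symm x.val).val) ⟨x, hx⟩
  constructor
  · -- forward direction
    intro hdm h hh X hXsub
    by_cases hex : ∃ h' ∈ FF 𝒜, extFF h h' ∧ bc h' ⊆ bc h \ X
    · exact Or.inr hex
    · left
      set Z := bc h \ X with hZ
      intro g hg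
      by_cases hcomp : ∀ s b, h s = some b → g s = none ∨ g s = some b
      · -- compatible case
        set m := unionFF g h with hm
        have hmFF : m ∈ FF 𝒜 := unionFF_mem hg hh
        have hmg : extFF g m := unionFF_ext_left g h
        have hmh : extFF h m := unionFF_ext_right hcomp
        have hmub : ¬ BddAbove (bc m) := hind m hmFF
        have hmsub : bc m ⊆ bc h := bc_anti hmh
        have hnotsub : ∀ m' ∈ FF 𝒜, extFF m m' → ¬ (bc m' ⊆ Z) := by
          intro m' hm' hemm' hsub
          exact hex ⟨m', hm', fun s b hs => hemm' s b (hmh s b hs), hsub⟩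
        set U := bc m ∩ Z with hU
        set V := bc m \ Z with hV
        have hUV : ¬ BddAbove U ∨ ¬ BddAbove V := by
          by_contra hb
          push_neg at hb
          refine hmub (BddAbove.mono ?_ (hb.1.union hb.2))
          intro x hx
          by_cases hxZ : x ∈ Z
          · exact Or.inl ⟨hx, hxZ⟩
          · exact Or.inr ⟨hx, hxZ⟩
        rcases hUV with hUun | hVun
        · -- U = bc m ∩ Z unbounded : leads to contradiction or done
          by_cases hU𝒜 : U ∈ 𝒜
          · cases hmu : m U with
            | none =>
              exfalso
              refine hnotsub (addFF m U true) (addFF_mem hmFF hU𝒜 true) (addFF_ext hmu true) ?_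
              exact (addFF_subset U).trans (inter_subset_right)
            | some b =>
              cases b with
              | true =>
                exfalso
                refine hnotsub m hmFF (fun s b hs => hs) ?_
                intro x hx
                exact ((hx U).1 hmu).2
              | false =>
                exfalso
                apply hUun
                have : U = (∅ : Set κ.ord.ToType) := by
                  ext x
                  simp only [mem_empty_iff_false, iff_false]
                  intro hx
                  exact ((hx.1 U).2 hmu) hx
                rw [this]
                exact bddAbove_empty
          · obtain ⟨m', hm', hemm', hdec⟩ := hdm U (hcard U hUun) hU𝒜 m hmFF
            rcases hdec with hd1 | hd2
            · -- bc m' ∩ U = ∅, so bc m' ∩ Z = ∅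
              refine ⟨m', hm', fun s b hs => hemm' s b (hmg s b hs), ?_⟩
              have hsub' : bc m' ⊆ bc m := bc_anti hemm'
              ext x
              simp only [mem_inter_iff, mem_empty_iff_false, iff_false, not_and]
              intro hx hxZ
              have : x ∈ bc m' ∩ U := ⟨hx, hsub' hx, hxZ⟩
              rw [hd1] at this
              exact this
            · exfalso
              refine hnotsub m' hm' hemm' ?_
              intro x hx
              have hxU : x ∈ U := by
                by_contra hxU
                have : x ∈ bc m' \ U := ⟨hx, hxU⟩
                rw [hd2] at this
                exact this
              exact hxU.2
        · -- V = bc m \ Z unbounded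
          by_cases hV𝒜 : V ∈ 𝒜
          · cases hmv : m V with
            | none =>
              refine ⟨addFF m V true, addFF_mem hmFF hV𝒜 true,
                fun s b hs => addFF_ext hmv true s b (hmg s b hs), ?_⟩
              ext x
              simp only [mem_inter_iff, mem_empty_iff_false, iff_false, not_and]
              intro hx hxZ
              exact (addFF_subset V hx).2 hxZ
            | some b =>
              cases b with
              | true =>
                refine ⟨m, hmFF, hmg, ?_⟩
                ext x
                simp only [mem_inter_iff, mem_empty_iff_false, iff_false, not_and]
                intro hx hxZ
                exact ((hx V).1 hmv).2 hxZ
              | false =>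
                exfalso
                apply hVun
                have : V = (∅ : Set κ.ord.ToType) := by
                  ext x
                  simp only [mem_empty_iff_false, iff_false]
                  intro hx
                  exact ((hx.1 V).2 hmv) hx
                rw [this]
                exact bddAbove_empty
          · obtain ⟨m', hm', hemm', hdec⟩ := hdm V (hcard V hVun) hV𝒜 m hmFF
            rcases hdec with hd1 | hd2
            · -- bc m' ∩ V = ∅ : then bc m' ⊆ Z, contradiction
              exfalso
              refine hnotsub m' hm' hemm' ?_
              intro x hx
              have hxm : x ∈ bc m := bc_anti hemm' hx
              by_contra hxZ
              have : x ∈ bc m' ∩ V := ⟨hx, hxm, hxZ⟩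
              rw [hd1] at this
              exact this
            · -- bc m' ⊆ V : disjoint from Z
              refine ⟨m', hm', fun s b hs => hemm' s b (hmg s b hs), ?_⟩
              ext x
              simp only [mem_inter_iff, mem_empty_iff_false, iff_false, not_and]
              intro hx hxZ
              have hxV : x ∈ V := by
                by_contra hxV
                have : x ∈ bc m' \ V := ⟨hx, hxV⟩
                rw [hd2] at this
                exact this
              exact hxV.2 hxZ
      · -- incompatible case : bc g ∩ bc h = ∅
        push_neg at hcomp
        obtain ⟨s, b, hhs, hgs1, hgs2⟩ := hcomp
        refine ⟨g, hg, fun s b hs => hs, ?_⟩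
        obtain ⟨b', hb'⟩ : ∃ b', g s = some b' := by
          cases hgb : g s with
          | none => exact absurd hgb hgs1
          | some c => exact ⟨c, rfl⟩
        have hbb' : b' ≠ b := fun e => hgs2 (e ▸ hb')
        ext x
        simp only [mem_inter_iff, mem_empty_iff_false, iff_false, not_and]
        intro hxg hxZ
        have hxh : x ∈ bc h := hxZ.1
        cases b with
        | true =>
          have hb'f : b' = false := by
            cases b' with
            | false => rfl
            | true => exact absurd rfl hbb'
          exact ((hxg s).2 (hb'f ▸ hb')) ((hxh s).1 hhs)
        | false =>
          have hb't : b' = true := by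
            cases b' with
            | true => rfl
            | false => exact absurd rfl hbb'
          exact ((hxh s).2 hhs) ((hxg s).1 (hb't ▸ hb'))
  · -- backward direction
    intro hc X hX hX𝒜 h hh
    have hdiff : bc h \ (bc h ∩ X) = bc h \ X := Set.diff_self_inter
    rcases hc h hh (bc h ∩ X) inter_subset_left with hid | ⟨h', hh', he, hsub⟩
    · rw [hdiff] at hid
      obtain ⟨h', hh', he, hdisj⟩ := hid h hh
      refine ⟨h', hh', he, Or.inr ?_⟩
      have hsub' : bc h' ⊆ bc h := bc_anti he
      ext x
      simp only [mem_diff, mem_empty_iff_false, iff_false, not_and, not_not]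
      intro hx
      by_contra hxX
      have : x ∈ bc h' ∩ (bc h \ X) := ⟨hx, hsub' hx, hxX⟩
      rw [hdisj] at this
      exact this
    · rw [hdiff] at hsub
      refine ⟨h', hh', he, Or.inl ?_⟩
      have hsub' : bc h' ⊆ bc h := bc_anti he
      ext x
      simp only [mem_inter_iff, mem_empty_iff_false, iff_false, not_and]
      intro hx hxX
      exact (hsub hx).2 hxX
end

section
/- Let $\mathcal{A}$ be a $\kappa$-independent family of cardinality $\kappa$ and $A \subseteq \kappa$ a set such that $\mathcal{A}^h \cap A$ is unbounded for every $h \in \mathrm{FF}_{<\omega,\kappa}(\mathcal{A})$. Then there exists $B \subseteq A$ with $B \notin \mathcal{A}$ such that $\mathcal{A} \cup \{B\}$ is $\kappa$-independent and, moreover, $\mathcal{A}^h \cap B$ and $\mathcal{A}^h \setminus B$ are unbounded for all $h \in \mathrm{FF}_{<\omega,\kappa}(\mathcal{A})$. -/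
open Set Cardinal

/-- Small subsets of `κ.ord.ToType` are bounded (for regular `κ`). -/
lemma bddAbove_of_mk_lt {κ : Cardinal} (hreg : κ.IsRegular) {S : Set κ.ord.ToType}
    (h : #S < κ) : BddAbove S := by
  classical
  set E := Ordinal.ToType.mk (o := κ.ord) with hE
  have hsup : (⨆ s : S, ((E.symm s.1 : Set.Iio κ.ord) : Ordinal)) < κ.ord :=
    Ordinal.iSup_lt_of_lt_cof (by rwa [hreg.cof_eq]) fun s => (E.symm s.1).2
  refine ⟨E ⟨_, hsup⟩, fun s hs => ?_⟩
  have h1 : ((E.symm s : Set.Iio κ.ord) : Ordinal) ≤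
      ⨆ s : S, ((E.symm s.1 : Set.Iio κ.ord) : Ordinal) :=
    Ordinal.le_iSup (fun s : S => ((E.symm s.1 : Set.Iio κ.ord) : Ordinal)) ⟨s, hs⟩
  have h2 : E.symm s ≤ ⟨_, hsup⟩ := h1
  calc s = E (E.symm s) := (E.apply_symm_apply s).symm
    _ ≤ E ⟨_, hsup⟩ := E.monotone h2

/-- Bounded subsets of `κ.ord.ToType` are small. -/
lemma mk_lt_of_bddAbove {κ : Cardinal} (hunc : ℵ₀ < κ) {S : Set κ.ord.ToType}
    (h : BddAbove S) : #S < κ := by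
  obtain ⟨m, hm⟩ := h
  have hsub : S ⊆ Set.Iic m := fun s hs => hm hs
  have h1 : #(Set.Iic m) < κ := by
    rw [← Set.Iio_insert, Cardinal.mk_insert (by simp)]
    exact Cardinal.add_lt_of_lt hunc.le (Cardinal.mk_Iio_ord_toType m)
      (lt_trans Cardinal.one_lt_aleph0 hunc)
  exact lt_of_le_of_lt (Cardinal.mk_le_mk_of_subset hsub) h1

lemma mk_FF_le {α : Type u} {𝒜 : Set (Set α)} {κ : Cardinal} (hcard : #𝒜 = κ)
    (hκ : ℵ₀ ≤ κ) : #(FF 𝒜) ≤ κ := by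
  classical
  have hinf : Infinite ↥𝒜 := Cardinal.aleph0_le_mk_iff.1 (hcard ▸ hκ)
  have hfin : ∀ (h : ↥(FF 𝒜)) (b : Bool), {s : ↥𝒜 | h.1 s.1 = some b}.Finite := by
    intro h b
    have : {s : ↥𝒜 | h.1 s.1 = some b} ⊆ Subtype.val ⁻¹' {s | h.1 s ≠ none} := by
      intro s hs
      simp only [Set.mem_preimage, Set.mem_setOf_eq] at *
      rw [hs]; simp
    exact Set.Finite.subset (h.2.2.preimage (Set.injOn_of_injective Subtype.val_injective))
      this
  let Φ : ↥(FF 𝒜) → Finset ↥𝒜 × Finset ↥𝒜 :=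
    fun h => ((hfin h true).toFinset, (hfin h false).toFinset)
  have hinj : Function.Injective Φ := by
    intro h h' hhh
    have key : ∀ (s : ↥𝒜) (b : Bool), h.1 s.1 = some b ↔ h'.1 s.1 = some b := by
      intro s b
      have h1 : (hfin h true).toFinset = (hfin h' true).toFinset := congrArg Prod.fst hhh
      have h2 : (hfin h false).toFinset = (hfin h' false).toFinset := congrArg Prod.snd hhh
      cases b
      · constructor <;> intro hx
        · have : s ∈ (hfin h false).toFinset := by simpa using hx
          rw [h2] at this; simpa using this
        · have : s ∈ (hfin h' false).toFinset := by simpa using hx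
          rw [← h2] at this; simpa using this
      · constructor <;> intro hx
        · have : s ∈ (hfin h true).toFinset := by simpa using hx
          rw [h1] at this; simpa using this
        · have : s ∈ (hfin h' true).toFinset := by simpa using hx
          rw [← h1] at this; simpa using this
    apply Subtype.ext
    funext s
    by_cases hs : s ∈ 𝒜
    · cases hb : h.1 s with
      | some b => exact ((key ⟨s, hs⟩ b).1 hb).symm
      | none =>
        cases hb' : h'.1 s with
        | some b => exact absurd ((key ⟨s, hs⟩ b).2 hb') (by simp [hb])
        | none => rfl
    · have e1 : h.1 s = none := by
        by_contra hc; exact hs (h.2.1 s hc)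
      have e2 : h'.1 s = none := by
        by_contra hc; exact hs (h'.2.1 s hc)
      rw [e1, e2]
  have : #(FF 𝒜) ≤ #(Finset ↥𝒜 × Finset ↥𝒜) := Cardinal.mk_le_of_injective hinj
  rwa [Cardinal.mk_prod, Cardinal.lift_id, Cardinal.mk_finset_of_infinite,
    hcard, Cardinal.mul_eq_self hκ] at this

/-- Given a κ-independent family `𝒜` of size κ and a set `A` meeting every finite
Boolean combination unboundedly, there is `B ⊆ A`, `B ∉ 𝒜`, such that `𝒜 ∪ {B}` is
κ-independent; indeed every combination meets both `B` and its complement unboundedly. -/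
theorem stmt_10 (κ : Cardinal) (hreg : κ.IsRegular) (hunc : ℵ₀ < κ)
    (𝒜 : Set (Set κ.ord.ToType)) (hsz : ∀ X ∈ 𝒜, #X = κ) (hcard : #𝒜 = κ)
    (hind : kIndepF 𝒜) (A : Set κ.ord.ToType)
    (hA : ∀ h ∈ FF 𝒜, ¬ BddAbove (bc h ∩ A)) :
    ∃ B : Set κ.ord.ToType, B ⊆ A ∧ B ∉ 𝒜 ∧ kIndepF (insert B 𝒜) ∧
      ∀ h ∈ FF 𝒜, ¬ BddAbove (bc h ∩ B) ∧ ¬ BddAbove (bc h \ B) := by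
  classical
  have hκ0 : ℵ₀ ≤ κ := hunc.le
  have hne : Nonempty κ.ord.ToType :=
    Ordinal.toType_nonempty_iff_ne_zero.mpr hreg.ord_pos.ne'
  have hmkα : #κ.ord.ToType = κ := Cardinal.mk_ord_toType κ
  have hFF0 : (fun _ => none : Set κ.ord.ToType → Option Bool) ∈ FF 𝒜 :=
    ⟨fun s hs => absurd rfl hs, by simp⟩
  have hFFne : Nonempty ↥(FF 𝒜) := ⟨⟨_, hFF0⟩⟩
  have hFFle : #(FF 𝒜) ≤ κ := mk_FF_le hcard hκ0
  -- an enumeration of `FF 𝒜` with all fibers unbounded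
  have hprod : #(κ.ord.ToType × ↥(FF 𝒜)) = #κ.ord.ToType := by
    rw [Cardinal.mk_prod]
    simp only [Cardinal.lift_id]
    rw [hmkα]
    exact Cardinal.mul_eq_left hκ0 hFFle (Cardinal.mk_ne_zero_iff.mpr hFFne)
  obtain ⟨q⟩ := Cardinal.eq.mp hprod.symm
  set e : κ.ord.ToType → ↥(FF 𝒜) := fun γ => (q γ).2 with he
  have hfiber : ∀ t : ↥(FF 𝒜), ¬ BddAbove {γ | e γ = t} := by
    intro t hbdd
    have hlt : #{γ | e γ = t} < κ := mk_lt_of_bddAbove hunc hbdd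
    have hinj : Function.Injective (fun a : κ.ord.ToType =>
        (⟨q.symm (a, t), by simp [he]⟩ : {γ | e γ = t})) := by
      intro a b hab
      have := congrArg Subtype.val hab
      simpa using this
    have := Cardinal.mk_le_of_injective hinj
    rw [hmkα] at this
    exact absurd (this.trans_lt hlt) (lt_irrefl κ)
  -- the recursion step
  have hNext : ∀ (γ : κ.ord.ToType) (prev : ∀ δ, δ < γ → κ.ord.ToType × κ.ord.ToType),
      ∃ p : κ.ord.ToType × κ.ord.ToType,
        p.1 ∈ bc (e γ).1 ∩ A ∧ p.2 ∈ bc (e γ).1 ∩ A ∧ p.1 < p.2 ∧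
        ∀ δ (hδ : δ < γ), (prev δ hδ).1 < p.1 ∧ (prev δ hδ).2 < p.1 := by
    intro γ prev
    set S1 := Set.range (fun d : Set.Iio γ => (prev d.1 d.2).1) with hS1
    set S2 := Set.range (fun d : Set.Iio γ => (prev d.1 d.2).2) with hS2
    have hlt : #(S1 ∪ S2 : Set κ.ord.ToType) < κ :=
      (Cardinal.mk_union_le _ _).trans_lt (Cardinal.add_lt_of_lt hκ0
        ((Cardinal.mk_range_le).trans_lt (Cardinal.mk_Iio_ord_toType γ))
        ((Cardinal.mk_range_le).trans_lt (Cardinal.mk_Iio_ord_toType γ)))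
    obtain ⟨m, hm⟩ := bddAbove_of_mk_lt hreg hlt
    have hub := not_bddAbove_iff.mp (hA (e γ).1 (e γ).2)
    obtain ⟨x, hx, hmx⟩ := hub m
    obtain ⟨y, hy, hxy⟩ := hub x
    refine ⟨(x, y), hx, hy, hxy, fun δ hδ => ?_⟩
    constructor
    · exact lt_of_le_of_lt (hm (Set.mem_union_left _ ⟨⟨δ, hδ⟩, rfl⟩)) hmx
    · exact lt_of_le_of_lt (hm (Set.mem_union_right _ ⟨⟨δ, hδ⟩, rfl⟩)) hmx
  -- build the recursion
  let g : κ.ord.ToType → κ.ord.ToType × κ.ord.ToType :=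
    (wellFounded_lt).fix (fun γ ih => (hNext γ ih).choose)
  have hg : ∀ γ, g γ = (hNext γ (fun δ _ => g δ)).choose := fun γ =>
    WellFounded.fix_eq _ _ γ
  have hspec : ∀ γ, (g γ).1 ∈ bc (e γ).1 ∩ A ∧ (g γ).2 ∈ bc (e γ).1 ∩ A ∧
      (g γ).1 < (g γ).2 ∧ ∀ δ (hδ : δ < γ), (g δ).1 < (g γ).1 ∧ (g δ).2 < (g γ).1 := by
    intro γ
    rw [hg γ]
    exact (hNext γ (fun δ _ => g δ)).choose_spec
  set x : κ.ord.ToType → κ.ord.ToType := fun γ => (g γ).1 with hxdef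
  set y : κ.ord.ToType → κ.ord.ToType := fun γ => (g γ).2 with hydef
  have hxbc : ∀ γ, x γ ∈ bc (e γ).1 := fun γ => (hspec γ).1.1
  have hxA : ∀ γ, x γ ∈ A := fun γ => (hspec γ).1.2
  have hybc : ∀ γ, y γ ∈ bc (e γ).1 := fun γ => (hspec γ).2.1.1
  have hxy : ∀ γ, x γ < y γ := fun γ => (hspec γ).2.2.1
  have hmono : ∀ δ γ, δ < γ → x δ < x γ ∧ y δ < x γ := fun δ γ h => (hspec γ).2.2.2 δ h
  have hxmono : StrictMono x := fun a b h => (hmono a b h).1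
  have hle : ∀ γ, γ ≤ x γ := fun γ => hxmono.le_apply
  set B : Set κ.ord.ToType := Set.range x with hBdef
  have hBA : B ⊆ A := by rintro _ ⟨γ, rfl⟩; exact hxA γ
  have hynB : ∀ γ, y γ ∉ B := by
    rintro γ ⟨δ, hδ⟩
    rcases lt_trichotomy δ γ with h | h | h
    · exact absurd hδ (ne_of_lt ((hmono δ γ h).1.trans (hxy γ)))
    · subst h; exact absurd hδ (ne_of_lt (hxy δ))
    · exact absurd hδ (ne_of_gt (hmono γ δ h).2)
  -- the unboundedness property
  have hBoth : ∀ h ∈ FF 𝒜, ¬ BddAbove (bc h ∩ B) ∧ ¬ BddAbove (bc h \ B) := by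
    intro h hh
    have hget : ∀ m : κ.ord.ToType, ∃ γ, e γ = ⟨h, hh⟩ ∧ m < γ := by
      intro m
      obtain ⟨γ, hγ, hmγ⟩ := not_bddAbove_iff.mp (hfiber ⟨h, hh⟩) m
      exact ⟨γ, hγ, hmγ⟩
    constructor
    · rw [not_bddAbove_iff]
      intro m
      obtain ⟨γ, hγ, hmγ⟩ := hget m
      refine ⟨x γ, ⟨?_, ⟨γ, rfl⟩⟩, lt_of_lt_of_le hmγ (hle γ)⟩
      have := hxbc γ; rwa [hγ] at this
    · rw [not_bddAbove_iff]
      intro m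
      obtain ⟨γ, hγ, hmγ⟩ := hget m
      refine ⟨y γ, ⟨?_, hynB γ⟩, lt_of_lt_of_le hmγ ((hle γ).trans (hxy γ).le)⟩
      have := hybc γ; rwa [hγ] at this
  -- B ∉ 𝒜
  have hBnotin : B ∉ 𝒜 := by
    intro hB
    set h₁ : Set κ.ord.ToType → Option Bool :=
      fun s => if s = B then some false else none with hh₁
    have hh₁FF : h₁ ∈ FF 𝒜 := by
      constructor
      · intro s hs
        by_contra hsB
        by_cases hsb : s = B
        · subst hsb; exact hsB hB
        · exact hs (by simp [hh₁, hsb])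
      · refine Set.Finite.subset (Set.finite_singleton B) ?_
        intro s hs
        by_contra hsb
        exact hs (if_neg hsb)
    have hempty : bc h₁ ∩ B = ∅ := by
      ext z
      simp only [Set.mem_inter_iff, Set.mem_empty_iff_false, iff_false, not_and]
      intro hz
      exact (hz B).2 (by simp [hh₁])
    have := (hBoth h₁ hh₁FF).1
    rw [hempty] at this
    exact this bddAbove_empty
  -- independence of the extended family
  refine ⟨B, hBA, hBnotin, ?_, hBoth⟩
  intro h' hh'
  set h : Set κ.ord.ToType → Option Bool := fun s => if s = B then none else h' s with hhdef
  have hhFF : h ∈ FF 𝒜 := by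
    constructor
    · intro s hs
      by_cases hsb : s = B
      · exact absurd (by simp [hhdef, hsb]) hs
      · have : h' s ≠ none := by simpa [hhdef, hsb] using hs
        rcases hh'.1 s this with h1 | h1
        · exact absurd h1 hsb
        · exact h1
    · refine Set.Finite.subset hh'.2 ?_
      intro s hs
      by_cases hsb : s = B
      · exact absurd (by simp [hhdef, hsb]) hs
      · simpa [hhdef, hsb] using hs
  have hclaim : ∀ z, z ∈ bc h → (h' B = some true → z ∈ B) →
      (h' B = some false → z ∉ B) → z ∈ bc h' := by
    intro z hz ht hf s
    by_cases hsb : s = B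
    · subst hsb; exact ⟨ht, hf⟩
    · have := hz s
      simpa [hhdef, if_neg hsb] using this
  by_cases hb : h' B = some false
  · intro hbdd
    refine (hBoth h hhFF).2 (hbdd.mono ?_)
    rintro z ⟨hz, hznB⟩
    exact hclaim z hz (fun ht => absurd (hb ▸ ht) (by simp)) (fun _ => hznB)
  · intro hbdd
    refine (hBoth h hhFF).1 (hbdd.mono ?_)
    rintro z ⟨hz, hzB⟩
    exact hclaim z hz (fun _ => hzB) (fun hf => absurd hf hb)
end

section
/- Let $\kappa$ be measurable with normal measure $\mathcal{U}$, $\mathcal{A}$ a $\kappa$-independent family of cardinality $\kappa$, and $A \in \mathcal{U}$ such that $\mathcal{A}^h \cap A$ is unbounded for every $h \in \mathrm{FF}_{<\omega,\kappa}(\mathcal{A})$. Then for every bounded partition $\mathcal{E}$ of $\kappa$ there is $B \subseteq A$ with $B \in \mathcal{U}$ such that $\mathcal{A}^h \cap B$ is unbounded for every $h$, and $|B \cap P| \le 2$ for every $P \in \mathcal{E}$ (i.e., $B$ is a strong-semi-selector for $\mathcal{E}$). -/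
open Set Cardinal

/-- A normal measure on `κ`: a κ-complete ultrafilter on `κ` closed under
diagonal intersections. -/
structure NormalMeasure (κ : Cardinal) where
  sets : Set (Set κ.ord.ToType)
  univ_mem : Set.univ ∈ sets
  empty_notMem : ∅ ∉ sets
  mem_of_superset : ∀ {s t : Set κ.ord.ToType}, s ∈ sets → s ⊆ t → t ∈ sets
  ultra : ∀ s : Set κ.ord.ToType, s ∈ sets ∨ sᶜ ∈ sets
  complete : ∀ S : Set (Set κ.ord.ToType), S ⊆ sets → #S < κ → ⋂₀ S ∈ sets
  normal : ∀ A : κ.ord.ToType → Set κ.ord.ToType, (∀ i, A i ∈ sets) →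
    {x | ∀ i < x, x ∈ A i} ∈ sets

/-- A bounded partition of `κ`: a partition of `κ` into bounded pieces. -/
def BoundedPartition (κ : Cardinal) (𝓔 : Set (Set κ.ord.ToType)) : Prop :=
  (∀ P ∈ 𝓔, BddAbove P) ∧ ⋃₀ 𝓔 = Set.univ ∧
    (∀ P ∈ 𝓔, ∀ Q ∈ 𝓔, P ≠ Q → Disjoint P Q) ∧ ∅ ∉ 𝓔

lemma my_exists_gt_of_not_bddAbove {α : Type*} [LinearOrder α] {s : Set α}
    (h : ¬ BddAbove s) (b : α) : ∃ x ∈ s, b < x := by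
  by_contra hc
  push_neg at hc
  exact h ⟨b, fun x hx => hc x hx⟩

lemma my_small_bddAbove {κ : Cardinal} (hreg : κ.IsRegular) {T : Set κ.ord.ToType}
    (hT : #T < κ) : BddAbove T := by
  haveI : IsWellOrder κ.ord.ToType (· < ·) := isWellOrder_lt
  have hb : Set.Bounded (· < ·) T := by
    apply not_isCofinal_iff.mp
    intro hc
    have hle := Ordinal.lt_cof_type hc
    rw [Ordinal.cof_toType, hreg.cof_eq] at hle
    exact absurd hT (not_lt.mpr hle)
  obtain ⟨a, ha⟩ := hb
  exact ⟨a, fun b hb => (ha b hb).le⟩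

lemma my_exists_rec {α : Type*} [LinearOrder α] [WellFoundedLT α]
    (g : α → Set α) (bnd t : α → α)
    (hg : ∀ i, ¬ BddAbove (g i))
    (hb : ∀ (i : α) (f : ↥(Set.Iio i) → α), BddAbove (insert (t i) (Set.range f))) :
    ∃ F : α → α, ∀ i, F i ∈ g i ∧ t i < F i ∧ ∀ j < i, bnd (F j) < F i := by
  have key : ∀ (i : α) (rec : ∀ j, j < i → α),
      ∃ x, x ∈ g i ∧ t i < x ∧ ∀ (j) (hj : j < i), bnd (rec j hj) < x := by
    intro i rec
    obtain ⟨β, hβ⟩ := hb i (fun j => bnd (rec j.1 j.2))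
    obtain ⟨x, hx, hβx⟩ := my_exists_gt_of_not_bddAbove (hg i) β
    refine ⟨x, hx, lt_of_le_of_lt (hβ (mem_insert _ _)) hβx, fun j hj => ?_⟩
    exact lt_of_le_of_lt (hβ (mem_insert_of_mem _ ⟨⟨j, hj⟩, rfl⟩)) hβx
  let F : α → α := (wellFounded_lt).fix (fun i rec => (key i rec).choose)
  have hFeq : ∀ i, F i = (key i (fun j _ => F j)).choose := fun i =>
    WellFounded.fix_eq _ _ i
  refine ⟨F, fun i => ?_⟩
  have hsp := (key i (fun j _ => F j)).choose_spec
  rw [← hFeq i] at hsp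
  exact ⟨hsp.1, hsp.2.1, fun j hj => hsp.2.2 j hj⟩

lemma my_FF_card {β : Type*} (𝒜 : Set (Set β)) (hinf : ℵ₀ ≤ #𝒜) : #(FF 𝒜) ≤ #𝒜 := by
  classical
  haveI : Infinite ↥𝒜 := Cardinal.aleph0_le_mk_iff.mp hinf
  have hfin : ∀ h : ↥(FF 𝒜), {p : ↥𝒜 × Bool | h.1 p.1.1 = some p.2}.Finite := by
    intro h
    have h1 : ((fun p : ↥𝒜 × Bool => ((p.1 : Set β), p.2)) ''
        {p : ↥𝒜 × Bool | h.1 p.1.1 = some p.2}).Finite := by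
      apply Set.Finite.subset (h.2.2.prod (Set.finite_univ (α := Bool)))
      rintro ⟨s, b⟩ ⟨⟨t, c⟩, ht, he⟩
      simp only [Prod.mk.injEq] at he
      obtain ⟨rfl, rfl⟩ := he
      simp only [Set.mem_setOf_eq] at ht
      exact ⟨by simp [ht], trivial⟩
    apply Set.Finite.of_finite_image h1
    intro p _ q _ hpq
    simp only [Prod.mk.injEq] at hpq
    exact Prod.ext (Subtype.ext hpq.1) hpq.2
  have hinj : Function.Injective (fun h : ↥(FF 𝒜) => (hfin h).toFinset) := by
    intro h₁ h₂ he
    simp only at he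
    have hset : ∀ p : ↥𝒜 × Bool, h₁.1 p.1.1 = some p.2 ↔ h₂.1 p.1.1 = some p.2 := by
      intro p
      constructor <;> intro hp
      · have : p ∈ (hfin h₂).toFinset := by rw [← he]; simpa using hp
        simpa using this
      · have : p ∈ (hfin h₁).toFinset := by rw [he]; simpa using hp
        simpa using this
    apply Subtype.ext
    funext s
    have hsb : ∀ b, h₁.1 s = some b ↔ h₂.1 s = some b := by
      intro b
      constructor <;> intro hp
      · have hs : s ∈ 𝒜 := h₁.2.1 s (by simp [hp])
        exact (hset (⟨s, hs⟩, b)).1 hp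
      · have hs : s ∈ 𝒜 := h₂.2.1 s (by simp [hp])
        exact (hset (⟨s, hs⟩, b)).2 hp
    rcases hb₂ : h₂.1 s with _ | b
    · rcases hb₁ : h₁.1 s with _ | b
      · rfl
      · exact absurd ((hsb b).1 hb₁) (by simp [hb₂])
    · exact (hsb b).2 hb₂
  calc #(FF 𝒜) ≤ #(Finset (↥𝒜 × Bool)) := Cardinal.mk_le_of_injective hinj
    _ = #(↥𝒜 × Bool) := Cardinal.mk_finset_of_infinite _
    _ ≤ #𝒜 := by
        have h1 : #(↥𝒜 × Bool) = #↥𝒜 * 2 := by simp [Cardinal.mk_prod]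
        rw [h1]
        calc #↥𝒜 * 2 ≤ #↥𝒜 * #↥𝒜 :=
            mul_le_mul' le_rfl
              (le_trans (by exact_mod_cast (Cardinal.nat_lt_aleph0 2).le : (2 : Cardinal) ≤ ℵ₀) hinf)
          _ = #𝒜 := Cardinal.mul_eq_self hinf

/-- Strong-semi-selector refinement: given `A ∈ 𝒰` meeting all Boolean combinations of
`𝒜` unboundedly and a bounded partition `𝓔`, there is `B ⊆ A` in `𝒰` still meeting
all combinations unboundedly with `|B ∩ P| ≤ 2` for each piece `P`. -/
theorem stmt_13 (κ : Cardinal) (hreg : κ.IsRegular) (hunc : ℵ₀ < κ)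
    (𝒰 : NormalMeasure κ)
    (𝒜 : Set (Set κ.ord.ToType)) (hsz : ∀ X ∈ 𝒜, #X = κ) (hcard : #𝒜 = κ)
    (hind : kIndepF 𝒜) (A : Set κ.ord.ToType) (hAU : A ∈ 𝒰.sets)
    (hA : ∀ h ∈ FF 𝒜, ¬ BddAbove (bc h ∩ A))
    (𝓔 : Set (Set κ.ord.ToType)) (h𝓔 : BoundedPartition κ 𝓔) :
    ∃ B : Set κ.ord.ToType, B ⊆ A ∧ B ∈ 𝒰.sets ∧
      (∀ h ∈ FF 𝒜, ¬ BddAbove (bc h ∩ B)) ∧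
      ∀ P ∈ 𝓔, #(↥(B ∩ P)) ≤ 2 := by
  classical
  obtain ⟨hbddP, hcover, hdisj, hnem⟩ := h𝓔
  have hsmallIic : ∀ b : κ.ord.ToType, #(Iic b) < κ := by
    intro b
    rw [← Set.Iio_insert]
    calc #(insert b (Iio b) : Set _) ≤ #(Iio b) + 1 := Cardinal.mk_insert_le
      _ < κ := Cardinal.add_lt_of_lt hreg.aleph0_le (Cardinal.mk_Iio_ord_toType b)
          (lt_trans one_lt_aleph0 hunc)
  -- piece machinery
  have hpcex : ∀ x : κ.ord.ToType, ∃ P, P ∈ 𝓔 ∧ x ∈ P := by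
    intro x
    have hx : x ∈ ⋃₀ 𝓔 := hcover ▸ Set.mem_univ x
    simpa [Set.mem_sUnion] using hx
  choose pc hpcE hpcmem using hpcex
  have hbndex : ∀ x : κ.ord.ToType, ∃ b, b ∈ upperBounds (pc x) := fun x => hbddP _ (hpcE x)
  choose bnd hbnd using hbndex
  have hbnd' : ∀ {x y : κ.ord.ToType} {P}, P ∈ 𝓔 → x ∈ P → y ∈ P → y ≤ bnd x := by
    intro x y P hP hx hy
    have hPeq : P = pc x := by
      by_contra hne'
      exact Set.disjoint_left.mp (hdisj P hP (pc x) (hpcE x) hne') hx (hpcmem x)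
    exact hbnd x (hPeq ▸ hy)
  -- the measure-one set C meeting each piece at most once
  have hCex : ∃ C, C ∈ 𝒰.sets ∧ ∀ P ∈ 𝓔, ((C ∩ P : Set _)).Subsingleton := by
    by_cases hp : ∃ a : κ.ord.ToType, ({a} : Set κ.ord.ToType) ∈ 𝒰.sets
    · obtain ⟨a, ha⟩ := hp
      refine ⟨{a}, ha, fun P hP x hx y hy => ?_⟩
      have h1 : x = a := hx.1
      have h2 : y = a := hy.1
      rw [h1, h2]
    · push_neg at hp
      have hsing : ∀ a : κ.ord.ToType, ({a}ᶜ : Set _) ∈ 𝒰.sets := by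
        intro a
        rcases 𝒰.ultra {a} with h | h
        · exact absurd h (hp a)
        · exact h
      have hnull : ∀ D : Set κ.ord.ToType, BddAbove D → Dᶜ ∈ 𝒰.sets := by
        intro D hD
        obtain ⟨b, hb⟩ := hD
        have h1 : ⋂₀ ((fun x => ({x}ᶜ : Set κ.ord.ToType)) '' D) = Dᶜ := by
          ext y
          simp only [Set.sInter_image, Set.mem_iInter, Set.mem_compl_iff,
            Set.mem_singleton_iff, Set.mem_compl_iff]
          constructor
          · intro h hy; exact h y hy rfl
          · intro h x hx he; exact h (he ▸ hx)
        rw [← h1]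
        apply 𝒰.complete
        · rintro S ⟨x, _, rfl⟩; exact hsing x
        · calc #((fun x => ({x}ᶜ : Set κ.ord.ToType)) '' D) ≤ #D := Cardinal.mk_image_le
            _ ≤ #(Iic b) := Cardinal.mk_le_mk_of_subset (fun x hx => hb hx)
            _ < κ := hsmallIic b
      refine ⟨{x | ∀ i < x, x ∈ (Iic (bnd i))ᶜ}, ?_, ?_⟩
      · exact 𝒰.normal _ (fun i => hnull _ ⟨bnd i, fun y hy => hy⟩)
      · intro P hP x hx y hy
        rcases lt_trichotomy x y with h | h | h
        · exact absurd (hbnd' hP hx.2 hy.2) (hy.1 x h)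
        · exact h
        · exact absurd (hbnd' hP hy.2 hx.2) (hx.1 y h)
  obtain ⟨C, hCU, hCsub⟩ := hCex
  -- FF is nonempty and small
  have hFF0 : (fun _ => (none : Option Bool)) ∈ FF 𝒜 := by
    constructor
    · intro s hs; exact absurd rfl hs
    · convert Set.finite_empty using 2
      ext s; simp
  haveI : Nonempty ↥(FF 𝒜) := ⟨⟨_, hFF0⟩⟩
  haveI : Nonempty κ.ord.ToType := by
    rw [Ordinal.toType_nonempty_iff_ne_zero]
    exact hreg.ord_pos.ne'
  have hκtype : #(κ.ord.ToType) = κ := Cardinal.mk_ord_toType κ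
  have hFFle : #(↥(FF 𝒜)) ≤ κ := by
    have := my_FF_card 𝒜 (by rw [hcard]; exact hreg.aleph0_le)
    rwa [hcard] at this
  have hprod : #(↥(FF 𝒜) × κ.ord.ToType) ≤ #(κ.ord.ToType) := by
    rw [hκtype]
    calc #(↥(FF 𝒜) × κ.ord.ToType) = #(↥(FF 𝒜)) * #(κ.ord.ToType) := by
          rw [Cardinal.mk_prod]; simp
      _ ≤ κ * κ := by rw [hκtype]; exact mul_le_mul' hFFle le_rfl
      _ = κ := Cardinal.mul_eq_self hreg.aleph0_le
  obtain ⟨e⟩ := (Cardinal.le_def _ _).mp hprod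
  set π : κ.ord.ToType → ↥(FF 𝒜) × κ.ord.ToType := Function.invFun e with hπdef
  have hπs : Function.Surjective π := Function.invFun_surjective e.injective
  -- recursion
  have hbound : ∀ (i : κ.ord.ToType) (f : ↥(Set.Iio i) → κ.ord.ToType),
      BddAbove (insert ((π i).2) (Set.range f)) := by
    intro i f
    apply my_small_bddAbove hreg
    calc #(insert ((π i).2) (Set.range f) : Set _) ≤ #(Set.range f) + 1 :=
        Cardinal.mk_insert_le
      _ < κ := Cardinal.add_lt_of_lt hreg.aleph0_le
          (lt_of_le_of_lt Cardinal.mk_range_le (Cardinal.mk_Iio_ord_toType i))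
          (lt_trans one_lt_aleph0 hunc)
  obtain ⟨F, hF⟩ := my_exists_rec
    (fun i => bc ((π i).1.1) ∩ A) bnd (fun i => (π i).2)
    (fun i => hA _ (π i).1.2) hbound
  refine ⟨(C ∩ A) ∪ Set.range F, ?_, ?_, ?_, ?_⟩
  · rintro x (hx | ⟨i, rfl⟩)
    · exact hx.2
    · exact (hF i).1.2
  · apply 𝒰.mem_of_superset _ Set.subset_union_left
    rw [← Set.sInter_pair C A]
    apply 𝒰.complete
    · rintro S hS
      rcases hS with rfl | rfl
      · exact hCU
      · exact hAU
    · exact lt_trans (((Set.finite_singleton A).insert C).lt_aleph0) hunc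
  · intro h hh hbdd
    obtain ⟨b, hb⟩ := hbdd
    obtain ⟨i, hi⟩ := hπs (⟨h, hh⟩, b)
    have h1 := hF i
    rw [hi] at h1
    have hmem : F i ∈ bc h ∩ ((C ∩ A) ∪ Set.range F) :=
      ⟨h1.1.1, Or.inr (Set.mem_range_self i)⟩
    exact absurd (hb hmem) (not_le.mpr h1.2.1)
  · intro P hP
    have hsub2 : ((C ∩ A ∪ Set.range F) ∩ P) ⊆ (C ∩ P) ∪ (Set.range F ∩ P) := by
      rintro x ⟨hx | hx, hxP⟩
      · exact Or.inl ⟨hx.1, hxP⟩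
      · exact Or.inr ⟨hx, hxP⟩
    have hrangeSub : (Set.range F ∩ P : Set _).Subsingleton := by
      rintro x ⟨⟨i, rfl⟩, hxP⟩ y ⟨⟨j, rfl⟩, hyP⟩
      rcases lt_trichotomy i j with hij | rfl | hij
      · exact absurd (hbnd' hP hxP hyP) (not_le.mpr ((hF j).2.2 i hij))
      · rfl
      · exact absurd (hbnd' hP hyP hxP) (not_le.mpr ((hF i).2.2 j hij))
    calc #(↥((C ∩ A ∪ Set.range F) ∩ P)) ≤ #(↥((C ∩ P) ∪ (Set.range F ∩ P))) :=
        Cardinal.mk_le_mk_of_subset hsub2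
      _ ≤ #(↥(C ∩ P)) + #(↥(Set.range F ∩ P)) := Cardinal.mk_union_le _ _
      _ ≤ 1 + 1 := add_le_add (Cardinal.mk_le_one_iff_set_subsingleton.mpr (hCsub P hP))
          (Cardinal.mk_le_one_iff_set_subsingleton.mpr hrangeSub)
      _ = 2 := one_add_one_eq_two
end

section
/- The forcing poset $\mathbb{P}_\mathcal{U}$ is $\kappa^+$-closed: every decreasing sequence of conditions of length $\kappa$ has a lower bound. Here a condition is a pair $(\mathcal{A}, A)$ with $\mathcal{A}$ a $\kappa$-independent family of cardinality $\kappa$ and $A \in \mathcal{U}$ such that $\mathcal{A}^h \cap A$ is unbounded for every finite Boolean combination; $(\mathcal{A}_1, A_1) \le (\mathcal{A}_0, A_0)$ iff $\mathcal{A}_1 \supseteq \mathcal{A}_0$ and $A_1 \setminus A_0$ is bounded. -/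
open Set Cardinal

/-- A condition of the poset `ℙ_𝒰`: a κ-independent family `𝒜` of size κ together
with `A ∈ 𝒰` meeting every finite Boolean combination of `𝒜` unboundedly. -/
def PCond (κ : Cardinal) (𝒰 : NormalMeasure κ)
    (𝒜 : Set (Set κ.ord.ToType)) (A : Set κ.ord.ToType) : Prop :=
  kIndepF 𝒜 ∧ #𝒜 = κ ∧ A ∈ 𝒰.sets ∧ ∀ h ∈ FF 𝒜, ¬ BddAbove (bc h ∩ A)

lemma small_bddAbove {κ : Cardinal} (hreg : κ.IsRegular) (S : Set κ.ord.ToType)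
    (hS : #S < κ) : BddAbove S := by
  set e := Ordinal.ToType.mk (o := κ.ord) with he
  have h2 : (⨆ y : S, (e.symm y.1).1) < κ.ord := by
    apply Ordinal.iSup_lt_ord _ (fun y => (e.symm y.1).2)
    rwa [hreg.cof_eq]
  refine ⟨e ⟨_, h2⟩, fun y hy => ?_⟩
  calc y = e (e.symm y) := (e.apply_symm_apply y).symm
    _ ≤ e ⟨_, h2⟩ := e.monotone (Subtype.coe_le_coe.mp
        (Ordinal.le_iSup (fun y : S => (e.symm y.1).1) ⟨y, hy⟩))

lemma mk_Iic_lt {κ : Cardinal} (hunc : ℵ₀ < κ) (α : κ.ord.ToType) : #(Iic α) < κ := by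
  have h : (Iic α : Set κ.ord.ToType) = insert α (Iio α) := by
    ext y; simp [le_iff_lt_or_eq, or_comm]
  rw [h]
  calc #(insert α (Iio α) : Set κ.ord.ToType) ≤ #(Iio α) + 1 := mk_insert_le
    _ < κ := Cardinal.add_lt_of_lt hunc.le (mk_Iio_ord_toType α)
        (one_lt_aleph0.trans hunc)

/-- `ℙ_𝒰` is κ⁺-closed: every decreasing κ-sequence of conditions, where
`(𝒜₁, A₁) ≤ (𝒜₀, A₀)` iff `𝒜₀ ⊆ 𝒜₁` and `A₁ \ A₀` is bounded, has a lower bound. -/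
theorem stmt_15 (κ : Cardinal) (hreg : κ.IsRegular) (hunc : ℵ₀ < κ)
    (𝒰 : NormalMeasure κ)
    (𝒜seq : κ.ord.ToType → Set (Set κ.ord.ToType))
    (Aseq : κ.ord.ToType → Set κ.ord.ToType)
    (hcond : ∀ i, PCond κ 𝒰 (𝒜seq i) (Aseq i))
    (hdec : ∀ i j, i ≤ j → 𝒜seq i ⊆ 𝒜seq j ∧ BddAbove (Aseq j \ Aseq i)) :
    ∃ ℬ B, PCond κ 𝒰 ℬ B ∧ ∀ i, 𝒜seq i ⊆ ℬ ∧ BddAbove (B \ Aseq i) := by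
  have hcond2 : ∀ i, #(𝒜seq i) = κ := fun i => (hcond i).2.1
  have hcond4 : ∀ i, ∀ h ∈ FF (𝒜seq i), ¬ BddAbove (bc h ∩ Aseq i) :=
    fun i => (hcond i).2.2.2
  haveI hTne : Nonempty κ.ord.ToType := by
    rw [Ordinal.nonempty_toType_iff, Ne, Cardinal.ord_eq_zero]
    exact hreg.pos.ne'
  set ℬ : Set (Set κ.ord.ToType) := ⋃ i, 𝒜seq i with hℬ
  -- every finite partial function on ℬ lives on some 𝒜seq j
  have hFFmem : ∀ h ∈ FF ℬ, ∃ j, h ∈ FF (𝒜seq j) := by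
    rintro h ⟨hmem, hfin⟩
    have hch : ∀ s : {s | h s ≠ none}, ∃ i, (s : Set κ.ord.ToType) ∈ 𝒜seq i :=
      fun s => mem_iUnion.1 (hmem s s.2)
    choose g hg using hch
    haveI := hfin.to_subtype
    obtain ⟨j, hj⟩ := (Set.finite_range g).bddAbove
    exact ⟨j, fun s hs => (hdec (g ⟨s, hs⟩) j (hj (mem_range_self _))).1 (hg ⟨s, hs⟩),
      hfin⟩
  -- cardinality of ℬ is κ
  have hBκ : #ℬ = κ := by
    refine le_antisymm ?_ ?_
    · calc #ℬ ≤ #κ.ord.ToType * ⨆ i, #(𝒜seq i) := mk_iUnion_le _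
        _ = κ * κ := by
            rw [mk_ord_toType]
            congr 1
            rw [show (fun i => #(𝒜seq i)) = fun _ : κ.ord.ToType => κ from funext hcond2]
            exact ciSup_const
        _ = κ := mul_eq_self hunc.le
    · have hle := mk_le_mk_of_subset (subset_iUnion 𝒜seq (Classical.arbitrary κ.ord.ToType))
      rwa [hcond2] at hle
  -- FF ℬ has at most κ elements
  have hFFle : #(FF ℬ) ≤ κ := by
    set G : FF ℬ → Set (↥ℬ × Bool) :=
      fun h => {p | (h : Set κ.ord.ToType → Option Bool) p.1.1 = some p.2} with hG
    have hGfin : ∀ h, (G h).Finite := by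
      intro h
      apply Set.Finite.of_finite_image (f := fun p : ↥ℬ × Bool => (p.1.1 : Set κ.ord.ToType))
      · refine h.2.2.subset ?_
        rintro _ ⟨p, hp, rfl⟩
        simp only [mem_setOf_eq]
        rw [hp]; simp
      · rintro p hp q hq hpq
        have h1 : p.1 = q.1 := Subtype.ext hpq
        have hpq' : (p.1 : Set κ.ord.ToType) = q.1 := hpq
        have h2 : p.2 = q.2 := by
          have hq' : (h : Set κ.ord.ToType → Option Bool) p.1.1 = some q.2 := by
            rw [hpq']; exact hq
          exact Option.some_injective _ (hp.symm.trans hq')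
        exact Prod.ext h1 h2
    have hinj : Function.Injective (fun h : FF ℬ => (hGfin h).toFinset) := by
      intro h h' hhh
      have hGeq : G h = G h' := by
        rwa [Set.Finite.toFinset_inj] at hhh
      apply Subtype.ext
      funext s
      rcases hcs : (h : Set κ.ord.ToType → Option Bool) s with _ | b
      · rcases hcs' : (h' : Set κ.ord.ToType → Option Bool) s with _ | b'
        · rfl
        · have hsB : s ∈ ℬ := h'.2.1 s (by rw [hcs']; simp)
          have : (⟨⟨s, hsB⟩, b'⟩ : ↥ℬ × Bool) ∈ G h' := hcs'
          rw [← hGeq] at this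
          have : (h : Set κ.ord.ToType → Option Bool) s = some b' := this
          rw [hcs] at this; exact this
      · have hsB : s ∈ ℬ := h.2.1 s (by rw [hcs]; simp)
        have : (⟨⟨s, hsB⟩, b⟩ : ↥ℬ × Bool) ∈ G h := hcs
        rw [hGeq] at this
        have : (h' : Set κ.ord.ToType → Option Bool) s = some b := this
        rw [this]
    haveI : Infinite ↥ℬ := Cardinal.infinite_iff.2 (by rw [hBκ]; exact hunc.le)
    calc #(FF ℬ) ≤ #(Finset (↥ℬ × Bool)) := mk_le_of_injective hinj
      _ = #(↥ℬ × Bool) := mk_finset_of_infinite _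
      _ ≤ κ * κ := by
          rw [mk_prod, Cardinal.lift_uzero, hBκ, Cardinal.mk_bool, Cardinal.lift_ofNat]
          exact mul_le_mul_right ((nat_lt_aleph0 2).le.trans hunc.le) κ
      _ = κ := mul_eq_self hunc.le
  -- uniform bound witnesses
  have hbd : ∀ i j, ∃ b : κ.ord.ToType, i ≤ j → ∀ y ∈ Aseq j \ Aseq i, y ≤ b := by
    intro i j
    by_cases hij : i ≤ j
    · obtain ⟨b, hbb⟩ := (hdec i j hij).2
      exact ⟨b, fun _ y hy => hbb hy⟩
    · exact ⟨Classical.arbitrary κ.ord.ToType, fun hh => absurd hh hij⟩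
  choose b hb using hbd
  -- a surjection onto pairs
  obtain ⟨e, hsurj⟩ : ∃ e : κ.ord.ToType → (↥(FF ℬ) × κ.ord.ToType), Function.Surjective e := by
    have hne : Nonempty (↥(FF ℬ) × κ.ord.ToType) := by
      refine ⟨⟨⟨fun _ => none, fun s h => absurd rfl h, by simp⟩, Classical.arbitrary κ.ord.ToType⟩⟩
    have hle : #(↥(FF ℬ) × κ.ord.ToType) ≤ #κ.ord.ToType := by
      rw [mk_ord_toType]
      calc #(↥(FF ℬ) × κ.ord.ToType) = #(FF ℬ) * #κ.ord.ToType := by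
            rw [mk_prod, Cardinal.lift_id, Cardinal.lift_id]
        _ ≤ κ * κ := by
            rw [mk_ord_toType]
            exact mul_le_mul_left hFFle κ
        _ = κ := mul_eq_self hunc.le
    obtain ⟨f⟩ := Cardinal.le_def _ _ |>.1 hle
    exact ⟨Function.invFun f, Function.invFun_surjective f.injective⟩
  -- the main choice of points
  have hex : ∀ α : κ.ord.ToType, ∃ x : κ.ord.ToType,
      x ∈ bc ((e α).1 : Set κ.ord.ToType → Option Bool) ∧ (∀ i ≤ α, x ∈ Aseq i) ∧ (e α).2 < x := by
    intro α
    set h := (e α).1 with hh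
    set β := (e α).2 with hβ
    obtain ⟨j₀, hj₀⟩ := hFFmem h h.2
    set j := max j₀ α with hj
    have hhj : (h : Set κ.ord.ToType → Option Bool) ∈ FF (𝒜seq j) :=
      ⟨fun s hs => (hdec j₀ j (le_max_left _ _)).1 (hj₀.1 s hs), hj₀.2⟩
    obtain ⟨u, hu⟩ : BddAbove ((fun i => b i j) '' Iic α) :=
      small_bddAbove hreg _ (lt_of_le_of_lt mk_image_le (mk_Iic_lt hunc α))
    have hunb := hcond4 j h hhj
    obtain ⟨x, hx, hxu⟩ : ∃ x ∈ bc (h : Set κ.ord.ToType → Option Bool) ∩ Aseq j, ¬ x ≤ max u β := by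
      by_contra hcon
      push_neg at hcon
      exact hunb ⟨max u β, fun y hy => hcon y hy⟩
    refine ⟨x, hx.1, fun i hi => ?_, lt_of_le_of_lt (le_max_right u β) (not_le.1 hxu)⟩
    by_contra hxi
    have hxd : x ∈ Aseq j \ Aseq i := ⟨hx.2, hxi⟩
    have hxb := hb i j (le_trans hi (le_max_right j₀ α)) x hxd
    have hxu2 : x ≤ u := le_trans hxb (hu (mem_image_of_mem _ hi))
    exact hxu (le_trans hxu2 (le_max_left u β))
  choose x hx1 hx2 hx3 using hex
  refine ⟨ℬ, {y | ∀ i < y, y ∈ Aseq i} ∪ range x, ⟨?_, hBκ, ?_, ?_⟩, fun i => ⟨subset_iUnion _ i, ?_⟩⟩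
  · -- κ-independence of ℬ
    intro h hh hbdd
    obtain ⟨j, hj⟩ := hFFmem h hh
    exact hcond4 j h hj (BddAbove.mono inter_subset_left hbdd)
  · -- B ∈ 𝒰
    exact 𝒰.mem_of_superset (𝒰.normal Aseq fun i => (hcond i).2.2.1) subset_union_left
  · -- boolean combinations meet B unboundedly
    rintro h hh ⟨u, hu⟩
    obtain ⟨α, hα⟩ := hsurj ⟨⟨h, hh⟩, u⟩
    have h1 : x α ∈ bc h := by
      have := hx1 α; rw [hα] at this; exact this
    have h3 : u < x α := by
      have := hx3 α; rw [hα] at this; exact this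
    have h2 : x α ∈ {y | ∀ i < y, y ∈ Aseq i} ∪ range x := Or.inr (mem_range_self α)
    exact absurd (hu ⟨h1, h2⟩) (not_le.2 h3)
  · -- B \ Aseq i is bounded
    have hsub : ({y | ∀ i < y, y ∈ Aseq i} ∪ range x) \ Aseq i ⊆ Iic i ∪ (x '' Iio i) := by
      rintro y ⟨hy | hy, hyn⟩
      · left
        by_contra hlt
        exact hyn (hy i (not_le.1 hlt))
      · obtain ⟨α, rfl⟩ := hy
        right
        refine mem_image_of_mem _ ?_
        by_contra hge
        exact hyn (hx2 α i (not_lt.1 hge))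
    exact BddAbove.mono hsub
      (BddAbove.union ⟨i, fun y hy => hy⟩
        (small_bddAbove hreg _ (lt_of_le_of_lt mk_image_le (mk_Iio_ord_toType i))))
end

section
/- If a decreasing sequence $(A_i)_{i<\kappa}$ of unbounded subsets of $\kappa$ and a $\kappa$-independent family $\mathcal{A} = \bigcup_{i<\kappa} \mathcal{A}_i$ (an increasing union of $\kappa$-independent families of size $\le \kappa$) satisfy that $\mathcal{A}_i^h \cap A_i$ is unbounded for every $i < \kappa$ and every $h \in \mathrm{FF}_{<\omega,\kappa}(\mathcal{A}_i)$, then there exists a set $A'' \subseteq \kappa$ which is a pseudo-intersection of $(A_i)_{i<\kappa}$ (i.e., $A'' \setminus A_i$ is bounded for each $i$) and meets $\mathcal{A}^h$ in an unbounded set for every $h \in \mathrm{FF}_{<\omega,\kappa}(\mathcal{A})$. -/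
open Set Cardinal

lemma FF_mono {α : Type*} {𝒜 ℬ : Set (Set α)} (hsub : 𝒜 ⊆ ℬ) : FF 𝒜 ⊆ FF ℬ :=
  fun _ hh => ⟨fun s hs => hsub (hh.1 s hs), hh.2⟩

lemma bdd_of_small {κ : Cardinal} (hreg : κ.IsRegular) {S : Set κ.ord.ToType}
    (hS : #S < κ) : BddAbove S := by
  have holim : Order.IsSuccLimit κ.ord := Cardinal.isSuccLimit_ord hreg.aleph0_le
  set e := Ordinal.ToType.mk (o := κ.ord) with he
  set g : S → Ordinal := fun x => Order.succ (e.symm x.1).1 with hg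
  have hlt : ∀ x : S, g x < κ.ord := fun x => holim.succ_lt (e.symm x.1).2
  have hsup : iSup g < κ.ord := Ordinal.iSup_lt_ord (by rwa [hreg.cof_eq]) hlt
  refine ⟨e ⟨iSup g, hsup⟩, fun x hx => ?_⟩
  have h1 : ((e.symm x : Set.Iio κ.ord) : Ordinal) < ((⟨iSup g, hsup⟩ : Set.Iio κ.ord) : Ordinal) :=
    lt_of_lt_of_le (Order.lt_succ_of_not_isMax (not_isMax _)) (Ordinal.le_iSup g ⟨x, hx⟩)
  calc x = e (e.symm x) := (e.apply_symm_apply x).symm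
    _ ≤ e ⟨iSup g, hsup⟩ := e.monotone (le_of_lt (Subtype.coe_lt_coe.mp h1))

lemma FF_card_le {α : Type*} {𝒜 : Set (Set α)} {κ : Cardinal} (hκ : ℵ₀ ≤ κ)
    (hc : #𝒜 ≤ κ) : #(FF 𝒜) ≤ κ := by
  classical
  have hfin : ∀ h : ↥(FF 𝒜), {p : ↥𝒜 × Bool | h.1 p.1.1 = some p.2}.Finite := by
    intro h
    have h1 : (Subtype.val ⁻¹' {s | h.1 s ≠ none} : Set ↥𝒜).Finite :=
      h.2.2.preimage Subtype.val_injective.injOn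
    refine (h1.prod (finite_univ (α := Bool))).subset ?_
    rintro ⟨s, b⟩ hp
    exact ⟨by simp only [mem_preimage, mem_setOf_eq]; simp_all, mem_univ _⟩
  set G : ↥(FF 𝒜) → Finset (↥𝒜 × Bool) := fun h => (hfin h).toFinset with hG
  have key : ∀ f g : ↥(FF 𝒜), G f = G g → ∀ s b, f.1 s = some b → g.1 s = some b := by
    intro f g hfg s b hs
    have hsA : s ∈ 𝒜 := f.2.1 s (by simp [hs])
    have : (⟨⟨s, hsA⟩, b⟩ : ↥𝒜 × Bool) ∈ G f := by
      simp only [hG, Set.Finite.mem_toFinset, mem_setOf_eq]; exact hs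
    rw [hfg] at this
    simpa only [hG, Set.Finite.mem_toFinset, mem_setOf_eq] using this
  have hinj : Function.Injective G := by
    intro f g hfg
    ext s : 2
    rcases e1 : f.1 s with _ | b <;> rcases e2 : g.1 s with _ | c
    · rfl
    · exact absurd (key g f hfg.symm s c e2) (by simp [e1])
    · exact absurd (key f g hfg s b e1) (by simp [e2])
    · rw [key f g hfg s b e1] at e2; exact e2
  calc #(FF 𝒜) ≤ #(Finset (↥𝒜 × Bool)) := mk_le_of_injective hinj
    _ ≤ κ := by
      rcases finite_or_infinite (↥𝒜 × Bool) with hfi | hif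
      · haveI := hfi
        haveI := Fintype.ofFinite (↥𝒜 × Bool)
        exact le_trans (le_of_lt (Cardinal.lt_aleph0_of_finite _)) hκ
      · rw [mk_finset_of_infinite]
        have : #(↥𝒜 × Bool) ≤ κ * κ := by
          rw [Cardinal.mk_prod]
          apply mul_le_mul'
          · simpa using hc
          · simp only [Cardinal.mk_fintype, Fintype.card_bool, Nat.cast_ofNat, lift_ofNat]
            exact le_trans (le_of_lt (Cardinal.lt_aleph0.2 ⟨2, by norm_num⟩)) hκ
        rwa [Cardinal.mul_eq_self hκ] at this

/-- Construction of a pseudo-intersection meeting every finite Boolean combination of an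
increasing union of κ-independent families unboundedly. -/
theorem stmt_16 (κ : Cardinal) (hreg : κ.IsRegular) (hunc : ℵ₀ < κ)
    (𝒜seq : κ.ord.ToType → Set (Set κ.ord.ToType))
    (Aseq : κ.ord.ToType → Set κ.ord.ToType)
    (hAunb : ∀ i, ¬ BddAbove (Aseq i))
    (hAdec : ∀ i j, i ≤ j → Aseq j ⊆ Aseq i)
    (h𝒜mono : ∀ i j, i ≤ j → 𝒜seq i ⊆ 𝒜seq j)
    (h𝒜ind : ∀ i, kIndepF (𝒜seq i))
    (h𝒜card : ∀ i, #(𝒜seq i) ≤ κ)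
    (hUind : kIndepF (⋃ i, 𝒜seq i))
    (hmain : ∀ i, ∀ h ∈ FF (𝒜seq i), ¬ BddAbove (bc h ∩ Aseq i)) :
    ∃ A'' : Set κ.ord.ToType, (∀ i, BddAbove (A'' \ Aseq i)) ∧
      ∀ h ∈ FF (⋃ i, 𝒜seq i), ¬ BddAbove (bc h ∩ A'') := by
  classical
  haveI hne : Nonempty κ.ord.ToType := by
    rw [Ordinal.toType_nonempty_iff_ne_zero]
    simpa using hreg.pos.ne'
  have hmkα : #(κ.ord.ToType) = κ := mk_ord_toType κ
  -- cardinality of the union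
  have hUcard : #(⋃ i, 𝒜seq i) ≤ κ := by
    calc #(⋃ i, 𝒜seq i) ≤ #(κ.ord.ToType) * ⨆ i, #(𝒜seq i) := mk_iUnion_le _
      _ ≤ κ * κ := mul_le_mul' hmkα.le (ciSup_le h𝒜card)
      _ = κ := mul_eq_self hreg.aleph0_le
  have hFFU : #(FF (⋃ i, 𝒜seq i)) ≤ κ := FF_card_le hreg.aleph0_le hUcard
  have hnoneFF : (fun _ => none) ∈ FF (⋃ i, 𝒜seq i) :=
    ⟨fun s hs => absurd rfl hs, by simp⟩
  haveI hFFne : Nonempty ↥(FF (⋃ i, 𝒜seq i)) := ⟨⟨_, hnoneFF⟩⟩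
  -- enumeration of FF of the union
  obtain ⟨emb⟩ : Nonempty (↥(FF (⋃ i, 𝒜seq i)) ↪ κ.ord.ToType) := by
    rw [← Cardinal.le_def, hmkα]; exact hFFU
  set F : κ.ord.ToType → ↥(FF (⋃ i, 𝒜seq i)) := Function.invFun emb with hF
  have hFsurj : ∀ x, F (emb x) = x := Function.leftInverse_invFun emb.injective
  -- each element of FF of the union lies in some FF (𝒜seq m)
  have hFFm : ∀ h ∈ FF (⋃ i, 𝒜seq i), ∃ m, h ∈ FF (𝒜seq m) := by
    intro h hh
    have hch : ∀ s : {s : Set κ.ord.ToType | h s ≠ none}, ∃ m, (s : Set κ.ord.ToType) ∈ 𝒜seq m :=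
      fun s => mem_iUnion.1 (hh.1 s s.2)
    choose c hc using hch
    haveI := hh.2.to_subtype
    have hfin : (Set.range c).Finite := Set.finite_range c
    obtain ⟨m, hm⟩ := hfin.bddAbove
    refine ⟨m, fun s hs => ?_, hh.2⟩
    exact h𝒜mono _ m (hm ⟨⟨s, hs⟩, rfl⟩) (hc ⟨s, hs⟩)
  choose ind hind using fun j => hFFm (F j).1 (F j).2
  -- choose witnesses
  have hpt : ∀ i j : κ.ord.ToType, ∃ y,
      ind j ≤ i → (y ∈ bc ((F j).1) ∩ Aseq i ∧ i < y) := by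
    intro i j
    by_cases hij : ind j ≤ i
    · have h1 : (F j).1 ∈ FF (𝒜seq i) := FF_mono (h𝒜mono _ _ hij) (hind j)
      have h2 := hmain i _ h1
      rw [not_bddAbove_iff] at h2
      obtain ⟨y, hy, hy2⟩ := h2 i
      exact ⟨y, fun _ => ⟨hy, hy2⟩⟩
    · exact ⟨Classical.arbitrary _, fun h => absurd h hij⟩
  choose k hk using hpt
  refine ⟨{x | ∃ i j, ind j ≤ i ∧ j ≤ i ∧ x = k i j}, ?_, ?_⟩
  · -- pseudo-intersection
    intro t
    apply bdd_of_small hreg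
    have hsub : {x | ∃ i j, ind j ≤ i ∧ j ≤ i ∧ x = k i j} \ Aseq t ⊆
        (fun p : κ.ord.ToType × κ.ord.ToType => k p.1 p.2) '' (Iio t ×ˢ Iio t) := by
      rintro x ⟨⟨i, j, hij, hji, rfl⟩, hxN⟩
      have hit : i < t := by
        by_contra hle
        exact hxN (hAdec t i (not_lt.mp hle) ((hk i j hij).1.2))
      exact ⟨(i, j), ⟨hit, lt_of_le_of_lt hji hit⟩, rfl⟩
    have h1 : #(↥(Iio t ×ˢ Iio t)) < κ := by
      have he : #(↥(Iio t ×ˢ Iio t)) = #(Iio t) * #(Iio t) := by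
        rw [Cardinal.mk_congr (Equiv.Set.prod _ _)]
        simp [Cardinal.mk_prod]
      rw [he]
      exact Cardinal.mul_lt_of_lt hreg.aleph0_le
        (Cardinal.mk_Iio_ord_toType t) (Cardinal.mk_Iio_ord_toType t)
    exact lt_of_le_of_lt ((mk_le_mk_of_subset hsub).trans mk_image_le) h1
  · -- unboundedness
    intro h hh
    rw [not_bddAbove_iff]
    intro x
    obtain ⟨j, hj⟩ : ∃ j, F j = ⟨h, hh⟩ := ⟨emb ⟨h, hh⟩, hFsurj _⟩
    set i := max x (max j (ind j)) with hi
    have hij : ind j ≤ i := le_trans (le_max_right _ _) (le_max_right _ _)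
    obtain ⟨⟨hybc, hyA⟩, hylt⟩ := hk i j hij
    refine ⟨k i j, ⟨?_, ⟨i, j, hij, le_trans (le_trans (le_max_left _ _) (le_max_right _ _)) le_rfl, rfl⟩⟩, lt_of_le_of_lt (le_max_left _ _) hylt⟩
    have : (F j).1 = h := by rw [hj]
    rwa [this] at hybc
end
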